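/- Let X be a set with ternary operation [ ] satisfying LN and RN. Define ∂ₙ = Σ_{i=0}^{n} (−1)ⁱ (dᵢⁿ'ᴸ − dᵢⁿ'ᴿ) on Cₙ = R⟨X^{n+2}⟩. Then ∂ₙ₋₁ ∘ ∂ₙ = 0. -/

import Mathlib

universe u
variable {X : Type u}

open Fin.NatCast in
/-- Substitution: replace the `i`-th entry `xᵢ` of the tuple by `[xᵢ₋₁ xᵢ xᵢ₊₁]`. -/
def subst (t : X → X → X → X) (n i : ℕ) (x : Fin (n + 2) → X) : Fin (n + 2) → X :=
  Function.update x (i : Fin (n + 2))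
    (t (x ((i : Fin (n + 2)) - 1)) (x (i : Fin (n + 2))) (x ((i : Fin (n + 2)) + 1)))

/-- Left face maps `dᵢⁿ'ᴸ` on tuples. -/
def dL (t : X → X → X → X) (n : ℕ) : ℕ → (Fin (n + 2) → X) → (Fin (n + 1) → X)
  | 0, x => fun j => x j.succ
  | i + 1, x => dL t n i (subst t n (i + 1) x)

/-- Auxiliary for right face maps: `dRa t n m = d_{n-m}ⁿ'ᴿ`. -/
def dRa (t : X → X → X → X) (n : ℕ) : ℕ → (Fin (n + 2) → X) → (Fin (n + 1) → X)
  | 0, x => fun j => x j.castSucc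
  | m + 1, x => dRa t n m (subst t n (n - m) x)

/-- Right face maps `dᵢⁿ'ᴿ` on tuples. -/
def dR (t : X → X → X → X) (n i : ℕ) : (Fin (n + 2) → X) → (Fin (n + 1) → X) :=
  dRa t n (n - i)

/-- Left face maps on the free module `Cₙ = R⟨X^{n+2}⟩`. -/
noncomputable def dLhat (R : Type*) [CommRing R] (t : X → X → X → X) (n i : ℕ) :
    ((Fin (n + 2) → X) →₀ R) →ₗ[R] ((Fin (n + 1) → X) →₀ R) :=
  Finsupp.lmapDomain R R (dL t n i)

/-- Right face maps on the free module `Cₙ = R⟨X^{n+2}⟩`. -/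
noncomputable def dRhat (R : Type*) [CommRing R] (t : X → X → X → X) (n i : ℕ) :
    ((Fin (n + 2) → X) →₀ R) →ₗ[R] ((Fin (n + 1) → X) →₀ R) :=
  Finsupp.lmapDomain R R (dR t n i)


/-! ### Auxiliary development -/

section AuxDev

open Fin.NatCast

variable (t : X → X → X → X)

/-- descending chain `t x_{k-1} x_k (t x_k x_{k+1} ( ... e))` of depth `m+1`. -/
def zch (x : ℕ → X) (e : X) : ℕ → ℕ → X
  | 0, k => t (x (k-1)) (x k) e
  | m+1, k => t (x (k-1)) (x k) (zch x e m (k+1))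

/-- ascending chain `t ( ... (t s x_k x_{k+1}) ...) x_{k+m} x_{k+m+1}`. -/
def wch (x : ℕ → X) (s : X) : ℕ → ℕ → X
  | 0, k => t s (x k) (x (k+1))
  | m+1, k => t (wch x s m k) (x (k+m+1)) (x (k+m+2))

/-- ℕ-level left face map. -/
def LopN (i : ℕ) (x : ℕ → X) : ℕ → X :=
  fun p => if p+1 ≤ i then zch t x (x (i+1)) (i-(p+1)) (p+1) else x (p+1)

/-- ℕ-level right face map. -/
def RopN (i : ℕ) (x : ℕ → X) : ℕ → X :=
  fun p => if p ≤ i then x p else wch t x (x i) (p-i-1) (i+1)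

lemma lop_le {i p : ℕ} (x : ℕ → X) (h : p+1 ≤ i) :
    LopN t i x p = zch t x (x (i+1)) (i-(p+1)) (p+1) := if_pos h

lemma lop_gt {i p : ℕ} (x : ℕ → X) (h : ¬ p+1 ≤ i) : LopN t i x p = x (p+1) := if_neg h

lemma rop_le {i p : ℕ} (x : ℕ → X) (h : p ≤ i) : RopN t i x p = x p := if_pos h

lemma rop_gt {i p : ℕ} (x : ℕ → X) (h : ¬ p ≤ i) :
    RopN t i x p = wch t x (x i) (p-i-1) (i+1) := if_neg h

lemma zch_congr {x y : ℕ → X} (e : X) :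
    ∀ m k, (∀ q, k-1 ≤ q → q ≤ k+m → x q = y q) → zch t x e m k = zch t y e m k := by
  intro m
  induction m with
  | zero =>
    intro k h
    simp only [zch]
    rw [h (k-1) le_rfl (by omega), h k (by omega) (by omega)]
  | succ m ih =>
    intro k h
    simp only [zch]
    rw [h (k-1) le_rfl (by omega), h k (by omega) (by omega),
      ih (k+1) (fun q h1 h2 => h q (by omega) (by omega))]

lemma wch_congr {x y : ℕ → X} (s : X) :
    ∀ m k, (∀ q, k ≤ q → q ≤ k+m+1 → x q = y q) → wch t x s m k = wch t y s m k := by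
  intro m
  induction m with
  | zero =>
    intro k h
    simp only [wch]
    rw [h k le_rfl (by omega), h (k+1) (by omega) (by omega)]
  | succ m ih =>
    intro k h
    simp only [wch]
    rw [h (k+m+1) (by omega) (by omega), h (k+m+2) (by omega) (by omega),
      ih k (fun q h1 h2 => h q (by omega) (by omega))]

lemma zch_shift (x : ℕ → X) (e : X) :
    ∀ m k, 1 ≤ k → zch t (fun q => x (q+1)) e m k = zch t x e m (k+1) := by
  intro m
  induction m with
  | zero =>
    intro k hk
    show t (x (k-1+1)) (x (k+1)) e = t (x (k+1-1)) (x (k+1)) e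
    rw [show k-1+1 = k by omega, show k+1-1 = k by omega]
  | succ m ih =>
    intro k hk
    show t (x (k-1+1)) (x (k+1)) (zch t (fun q => x (q+1)) e m (k+1))
        = t (x (k+1-1)) (x (k+1)) (zch t x e m (k+1+1))
    rw [show k-1+1 = k by omega, show k+1-1 = k by omega, ih (k+1) (by omega)]

lemma wch_shift (x : ℕ → X) (s : X) :
    ∀ m k, wch t (fun q => x (q+1)) s m k = wch t x s m (k+1) := by
  intro m
  induction m with
  | zero => intro k; rfl
  | succ m ih =>
    intro k
    show t (wch t (fun q => x (q+1)) s m k) (x (k+m+1+1)) (x (k+m+2+1))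
        = t (wch t x s m (k+1)) (x (k+1+m+1)) (x (k+1+m+2))
    rw [ih k, show k+m+1+1 = k+1+m+1 by omega]

lemma zch_bot (x : ℕ → X) (e : X) :
    ∀ m k, zch t x (t (x (k+m)) (x (k+m+1)) e) m k = zch t x e (m+1) k := by
  intro m
  induction m with
  | zero => intro k; rfl
  | succ m ih =>
    intro k
    show t (x (k-1)) (x k) (zch t x (t (x (k+(m+1))) (x (k+(m+1)+1)) e) m (k+1))
        = t (x (k-1)) (x k) (zch t x e (m+1) (k+1))
    rw [show k+(m+1) = (k+1)+m by omega, show (k+1)+m+1 = (k+1)+m+1 from rfl, ih (k+1)]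

lemma wch_bot (x : ℕ → X) (s : X) :
    ∀ m k, wch t x (t s (x k) (x (k+1))) m (k+1) = wch t x s (m+1) k := by
  intro m
  induction m with
  | zero => intro k; rfl
  | succ m ih =>
    intro k
    show t (wch t x (t s (x k) (x (k+1))) m (k+1)) (x (k+1+m+1)) (x (k+1+m+2))
        = t (wch t x s (m+1) k) (x (k+(m+1)+1)) (x (k+(m+1)+2))
    rw [ih k, show k+1+m+1 = k+(m+1)+1 by omega, show k+1+m+2 = k+(m+1)+2 by omega]


/-! ### LL machinery -/

def QCn (x : ℕ → X) (c e : X) : ℕ → ℕ → X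
  | 0, k => t (t (x (k-1)) (x k) c) c e
  | m+1, k => t (zch t x c (m+1) k) (zch t x c m (k+1)) (QCn x c e m (k+1))

def PCn (x : ℕ → X) (c e : X) : ℕ → ℕ → X
  | 0, k => t (t (x (k-1)) (x k) (t (x k) c e)) (t (x k) c e) e
  | m+1, k => t (zch t x (t (x (k+m+1)) c e) (m+1) k)
      (zch t x (t (x (k+m+1)) c e) m (k+1)) (PCn x c e m (k+1))

def EXn (x : ℕ → X) (e : X) : X → ℕ → ℕ → X
  | w, k, 0 => t w (x k) e
  | w, k, m+1 => t w (t w (x k) (x (k+1))) (EXn x e (t w (x k) (x (k+1))) (k+1) m)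

variable {t}

lemma zch_aux (hLN : ∀ a b c d, t a b (t b c d) = t a (t a b c) (t (t a b c) c d))
    (x : ℕ → X) (c e : X) :
    ∀ m k, zch t x (t (x (k+m)) c e) m k = t (x (k-1)) (zch t x c m k) (QCn t x c e m k) := by
  intro m
  induction m with
  | zero =>
    intro k
    show t (x (k-1)) (x k) (t (x (k+0)) c e)
        = t (x (k-1)) (t (x (k-1)) (x k) c) (t (t (x (k-1)) (x k) c) c e)
    rw [show k+0 = k from rfl]
    exact hLN _ _ _ _
  | succ m ih =>
    intro k
    show t (x (k-1)) (x k) (zch t x (t (x (k+(m+1))) c e) m (k+1))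
        = t (x (k-1)) (zch t x c (m+1) k) (QCn t x c e (m+1) k)
    rw [show k+(m+1) = (k+1)+m by omega, ih (k+1)]
    rw [show (k+1)-1 = k from rfl]
    exact hLN _ _ _ _

lemma pc_eq_qc (hLN : ∀ a b c d, t a b (t b c d) = t a (t a b c) (t (t a b c) c d))
    (hRN : ∀ a b c d, t (t a b c) c d = t (t a b (t b c d)) (t b c d) d)
    (x : ℕ → X) (c e : X) :
    ∀ m k, PCn t x c e m k = QCn t x c e m k := by
  intro m
  induction m with
  | zero =>
    intro k
    exact (hRN (x (k-1)) (x k) c e).symm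
  | succ m ih =>
    intro k
    show t (zch t x (t (x (k+m+1)) c e) (m+1) k)
        (zch t x (t (x (k+m+1)) c e) m (k+1)) (PCn t x c e m (k+1))
      = t (zch t x c (m+1) k) (zch t x c m (k+1)) (QCn t x c e m (k+1))
    have h1 : zch t x (t (x (k+m+1)) c e) m (k+1)
        = t (x k) (zch t x c m (k+1)) (QCn t x c e m (k+1)) := by
      rw [show k+m+1 = (k+1)+m by omega, zch_aux hLN, show (k+1)-1 = k from rfl]
    have h2 : zch t x (t (x (k+m+1)) c e) (m+1) k
        = t (x (k-1)) (x k) (t (x k) (zch t x c m (k+1)) (QCn t x c e m (k+1))) := by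
      show t (x (k-1)) (x k) (zch t x (t (x (k+m+1)) c e) m (k+1)) = _
      rw [h1]
    rw [h1, h2, ih (k+1)]
    exact (hRN (x (k-1)) (x k) (zch t x c m (k+1)) (QCn t x c e m (k+1))).symm

lemma lemexp (hLN : ∀ a b c d, t a b (t b c d) = t a (t a b c) (t (t a b c) c d))
    (x : ℕ → X) (e : X) :
    ∀ m w k, t w (x k) (zch t x e m (k+1)) = EXn t x e w k (m+1) := by
  intro m
  induction m with
  | zero =>
    intro w k
    show t w (x k) (t (x (k+1-1)) (x (k+1)) e)
        = t w (t w (x k) (x (k+1))) (t (t w (x k) (x (k+1))) (x (k+1)) e)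
    rw [show k+1-1 = k from rfl]
    exact hLN _ _ _ _
  | succ m ih =>
    intro w k
    show t w (x k) (t (x (k+1-1)) (x (k+1)) (zch t x e m (k+1+1)))
        = t w (t w (x k) (x (k+1))) (EXn t x e (t w (x k) (x (k+1))) (k+1) (m+1))
    rw [show k+1-1 = k from rfl, ← ih (t w (x k) (x (k+1))) (k+1)]
    exact hLN _ _ _ _

/-! ### LL assembly -/

variable (t)

def EE (x : ℕ → X) (i j : ℕ) : X :=
  if i+2 ≤ j then zch t x (x (j+1)) (j-i-2) (i+2) else x (i+2)

variable {t}

lemma zchA_eq {i j : ℕ} (h : i < j) (x : ℕ → X) :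
    zch t x (x (j+1)) (j-(i+1)) (i+1) = t (x i) (x (i+1)) (EE t x i j) := by
  unfold EE
  by_cases h2 : i+2 ≤ j
  · rw [if_pos h2, show j-(i+1) = (j-i-2)+1 by omega]
    show t (x (i+1-1)) (x (i+1)) (zch t x (x (j+1)) (j-i-2) (i+1+1)) = _
    rw [show i+1-1 = i from rfl, show i+1+1 = i+2 from rfl]
  · rw [if_neg h2, show j-(i+1) = 0 by omega]
    show t (x (i+1-1)) (x (i+1)) (x (j+1)) = _
    rw [show i+1-1 = i from rfl, show j+1 = i+2 by omega]

lemma lemA {i j : ℕ} (h : i < j) (x : ℕ → X) :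
    ∀ m k, k+m = i →
      zch t x (x (j+1)) (j-k) k = zch t x (t (x i) (x (i+1)) (EE t x i j)) m k := by
  intro m
  induction m with
  | zero =>
    intro k hk
    have hk' : k = i := by omega
    subst hk'
    rw [show j-k = (j-(k+1))+1 by omega]
    show t (x (k-1)) (x k) (zch t x (x (j+1)) (j-(k+1)) (k+1)) = _
    rw [zchA_eq h x]
    rfl
  | succ m ih =>
    intro k hk
    rw [show j-k = (j-(k+1))+1 by omega]
    show t (x (k-1)) (x k) (zch t x (x (j+1)) (j-(k+1)) (k+1)) = _
    rw [ih (k+1) (by omega)]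
    rfl

lemma he {i j : ℕ} (h : i < j) (x : ℕ → X) : LopN t j x (i+1) = EE t x i j := by
  unfold LopN EE
  by_cases h2 : i+2 ≤ j
  · rw [if_pos (show i+1+1 ≤ j by omega), if_pos h2, show j-(i+1+1) = j-i-2 by omega,
      show i+1+1 = i+2 from rfl]
  · rw [if_neg (show ¬ i+1+1 ≤ j by omega), if_neg h2]

lemma leml1 {i j : ℕ} (h : i < j) (x : ℕ → X) :
    ∀ m k, 1 ≤ k → k+m = i →
      zch t (LopN t j x) (LopN t j x (i+1)) m k = PCn t x (x (i+1)) (EE t x i j) m k := by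
  intro m
  induction m with
  | zero =>
    intro k h1 hk
    have hk' : k = i := by omega
    subst hk'
    show t (LopN t j x (k-1)) (LopN t j x k) (LopN t j x (k+1)) = _
    rw [he h x]
    rw [lop_le t _ (show (k-1)+1 ≤ j by omega), lop_le t _ (show k+1 ≤ j by omega)]
    rw [show (k-1)+1 = k by omega]
    rw [lemA h x 0 k (by omega), zchA_eq h x]
    rfl
  | succ m ih =>
    intro k h1 hk
    show t (LopN t j x (k-1)) (LopN t j x k) (zch t (LopN t j x) (LopN t j x (i+1)) m (k+1)) = _
    rw [lop_le t _ (show (k-1)+1 ≤ j by omega), lop_le t _ (show k+1 ≤ j by omega)]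
    rw [show (k-1)+1 = k by omega]
    rw [lemA h x (m+1) k (by omega), lemA h x m (k+1) (by omega), ih (k+1) (by omega) (by omega)]
    show _ = t (zch t x (t (x (k+m+1)) (x (i+1)) (EE t x i j)) (m+1) k)
      (zch t x (t (x (k+m+1)) (x (i+1)) (EE t x i j)) m (k+1)) (PCn t x (x (i+1)) (EE t x i j) m (k+1))
    rw [show k+m+1 = i by omega]

lemma lop_tail {i K : ℕ} (hK : i < K) (x : ℕ → X) (E : X) :
    ∀ M, zch t (LopN t i x) E M K = zch t x E M (K+1) := by
  intro M
  rw [zch_congr t E M K (y := fun q => x (q+1))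
    (fun q h1 h2 => lop_gt t x (by omega)), zch_shift t x E M K (by omega)]

lemma leml2 {i j : ℕ} (h : i < j) (x : ℕ → X) :
    ∀ m k, 1 ≤ k → k+m = i →
      zch t (LopN t i x) (LopN t i x j) (j-1-k) k
        = QCn t x (x (i+1)) (EE t x i j) m k := by
  intro m
  have hEj : LopN t i x j = x (j+1) := lop_gt t x (by omega)
  induction m with
  | zero =>
    intro k h1 hk
    have hk' : k = i := by omega
    subst hk'
    by_cases h2 : k+2 ≤ j
    · rw [show j-1-k = (j-k-2)+1 by omega]
      show t (LopN t k x (k-1)) (LopN t k x k) (zch t (LopN t k x) (LopN t k x j) (j-k-2) (k+1)) = _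
      rw [lop_tail (by omega) x _ (j-k-2), hEj]
      rw [lop_le t _ (show (k-1)+1 ≤ k by omega), lop_gt t _ (show ¬ k+1 ≤ k by omega)]
      rw [show (k-1)+1 = k by omega, show k-k = 0 from by omega]
      show t (t (x (k-1)) (x k) (x (k+1))) (x (k+1)) (zch t x (x (j+1)) (j-k-2) (k+1+1)) = _
      unfold EE QCn
      rw [if_pos (show k+2 ≤ j from h2)]
    · rw [show j-1-k = 0 by omega]
      show t (LopN t k x (k-1)) (LopN t k x k) (LopN t k x j) = _
      rw [hEj, lop_le t _ (show (k-1)+1 ≤ k by omega), lop_gt t _ (show ¬ k+1 ≤ k by omega)]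
      rw [show (k-1)+1 = k by omega, show k-k = 0 from by omega]
      unfold EE QCn
      rw [if_neg (show ¬ k+2 ≤ j from h2), show j+1 = k+2 by omega]
      rfl
  | succ m ih =>
    intro k h1 hk
    rw [show j-1-k = (j-1-(k+1))+1 by omega]
    show t (LopN t i x (k-1)) (LopN t i x k) (zch t (LopN t i x) (LopN t i x j) (j-1-(k+1)) (k+1)) = _
    rw [ih (k+1) (by omega) (by omega)]
    rw [lop_le t _ (show (k-1)+1 ≤ i by omega), lop_le t _ (show k+1 ≤ i by omega)]
    rw [show (k-1)+1 = k by omega, show i-(k+1) = m by omega, show i-k = m+1 by omega]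
    rfl

theorem llN (hLN : ∀ a b c d, t a b (t b c d) = t a (t a b c) (t (t a b c) c d))
    (hRN : ∀ a b c d, t (t a b c) c d = t (t a b (t b c d)) (t b c d) d)
    {i j : ℕ} (h : i < j) (x : ℕ → X) (p : ℕ) :
    LopN t i (LopN t j x) p = LopN t (j-1) (LopN t i x) p := by
  by_cases h1 : p+1 ≤ i
  · rw [lop_le t _ h1, lop_le t _ (show p+1 ≤ j-1 by omega)]
    rw [leml1 h x (i-(p+1)) (p+1) (by omega) (by omega)]
    rw [show (j-1)+1 = j by omega]
    rw [leml2 h x (i-(p+1)) (p+1) (by omega) (by omega)]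
    exact pc_eq_qc hLN hRN x _ _ _ _
  · by_cases h2 : p+1 ≤ j-1
    · rw [lop_gt t _ h1, lop_le t _ h2, lop_le t _ (show p+1+1 ≤ j by omega)]
      rw [show (j-1)+1 = j by omega]
      rw [lop_tail (by omega) x _ (j-1-(p+1)), lop_gt t x (show ¬ j+1 ≤ i by omega)]
      rw [show j-1-(p+1) = j-(p+1+1) by omega]
    · rw [lop_gt t _ h1, lop_gt t _ h2]
      rw [lop_gt t _ (show ¬ p+1+1 ≤ j by omega), lop_gt t _ (show ¬ p+1+1 ≤ i by omega)]


/-! ### RL machinery -/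

variable (t)

def Av (x : ℕ → X) (j : ℕ) : ℕ → X :=
  fun q => if q ≤ j then zch t x (x (j+1)) (j-q) q else x (j+1)

variable {t}

lemma av_unfold {j q : ℕ} (x : ℕ → X) (h1 : 1 ≤ q) (h2 : q ≤ j) :
    Av t x j q = t (x (q-1)) (x q) (Av t x j (q+1)) := by
  unfold Av
  rw [if_pos h2]
  by_cases h3 : q+1 ≤ j
  · rw [if_pos h3, show j-q = (j-(q+1))+1 by omega]
    rfl
  · have hq : q = j := by omega
    subst hq
    rw [if_neg h3, show q-q = 0 by omega]
    rfl

lemma yav {j p : ℕ} (x : ℕ → X) (h : p ≤ j) : LopN t j x p = Av t x j (p+1) := by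
  unfold Av
  by_cases h1 : p+1 ≤ j
  · rw [lop_le t _ h1, if_pos h1]
  · rw [lop_gt t _ h1, if_neg h1, show p+1 = j+1 by omega]

lemma invN (hRN : ∀ a b c d, t (t a b c) c d = t (t a b (t b c d)) (t b c d) d)
    {i j : ℕ} (x : ℕ → X) :
    ∀ m, i+1+m ≤ j-1 → i+1 ≤ j-1 →
      wch t (LopN t j x) (LopN t j x i) m (i+1)
        = t (wch t x (x i) m (i+1)) (x (i+m+2)) (Av t x j (i+m+3)) := by
  intro m
  induction m with
  | zero =>
    intro hm hij
    show t (LopN t j x i) (LopN t j x (i+1)) (LopN t j x (i+1+1)) = _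
    rw [yav x (show i ≤ j by omega), yav x (show i+1 ≤ j by omega),
      yav x (show i+1+1 ≤ j by omega)]
    rw [av_unfold x (by omega) (show i+1 ≤ j by omega),
      av_unfold x (by omega) (show i+2 ≤ j by omega)]
    rw [show i+1-1 = i from rfl, show i+2-1 = i+1 from rfl]
    rw [show i+1+1 = i+2 from rfl, show i+2+1 = i+3 from rfl]
    rw [← hRN (x i) (x (i+1)) (x (i+2)) (Av t x j (i+3))]
    rfl
  | succ m ih =>
    intro hm hij
    show t (wch t (LopN t j x) (LopN t j x i) m (i+1))
        (LopN t j x (i+1+m+1)) (LopN t j x (i+1+m+2)) = _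
    rw [ih (by omega) hij]
    rw [yav x (show i+1+m+1 ≤ j by omega), yav x (show i+1+m+2 ≤ j by omega)]
    rw [show i+1+m+1+1 = i+m+3 by omega, show i+m+3+1 = i+m+4 by omega]
    rw [av_unfold x (by omega) (show i+m+3 ≤ j by omega)]
    rw [show i+m+3-1 = i+m+2 by omega]
    rw [← hRN (wch t x (x i) m (i+1)) (x (i+m+2)) (x (i+m+3)) (Av t x j (i+m+4))]
    have hw : wch t x (x i) (m+1) (i+1)
        = t (wch t x (x i) m (i+1)) (x (i+m+2)) (x (i+m+3)) := by
      show t (wch t x (x i) m (i+1)) (x (i+1+m+1)) (x (i+1+m+2)) = _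
      rw [show i+1+m+1 = i+m+2 by omega, show i+1+m+2 = i+m+3 by omega]
    rw [show i+(m+1)+2 = i+m+3 by omega, show i+(m+1)+3 = i+m+4 by omega, hw]

lemma lemwz {i j : ℕ} (h : i < j) (x : ℕ → X) :
    ∀ M K, i+2 ≤ K → K+M = j-1 →
      zch t (RopN t i x) (RopN t i x j) M K
        = EXn t x (x (j+1)) (wch t x (x i) (K-i-2) (i+1)) K (M+1) := by
  intro M
  induction M with
  | zero =>
    intro K hK hKM
    have hKj : K = j-1 := by omega
    show t (RopN t i x (K-1)) (RopN t i x K) (RopN t i x j) = _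
    rw [rop_gt t _ (show ¬ K-1 ≤ i by omega), rop_gt t _ (show ¬ K ≤ i by omega),
      rop_gt t _ (show ¬ j ≤ i by omega)]
    show _ = t (wch t x (x i) (K-i-2) (i+1))
        (t (wch t x (x i) (K-i-2) (i+1)) (x K) (x (K+1)))
        (t (t (wch t x (x i) (K-i-2) (i+1)) (x K) (x (K+1))) (x (K+1)) (x (j+1)))
    have e1 : wch t x (x i) (K-1-i-1) (i+1) = wch t x (x i) (K-i-2) (i+1) := by
      rw [show K-1-i-1 = K-i-2 by omega]
    have e2 : wch t x (x i) (K-i-1) (i+1)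
        = t (wch t x (x i) (K-i-2) (i+1)) (x K) (x (K+1)) := by
      rw [show K-i-1 = (K-i-2)+1 by omega]
      show t (wch t x (x i) (K-i-2) (i+1)) (x (i+1+(K-i-2)+1)) (x (i+1+(K-i-2)+2)) = _
      rw [show i+1+(K-i-2)+1 = K by omega, show i+1+(K-i-2)+2 = K+1 by omega]
    have e3 : wch t x (x i) (j-i-1) (i+1)
        = t (wch t x (x i) (K-i-1) (i+1)) (x (K+1)) (x (j+1)) := by
      rw [show j-i-1 = (K-i-1)+1 by omega]
      show t (wch t x (x i) (K-i-1) (i+1)) (x (i+1+(K-i-1)+1)) (x (i+1+(K-i-1)+2)) = _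
      rw [show i+1+(K-i-1)+1 = K+1 by omega, show i+1+(K-i-1)+2 = j+1 by omega]
    rw [e1, e3, e2]
  | succ M ih =>
    intro K hK hKM
    show t (RopN t i x (K-1)) (RopN t i x K) (zch t (RopN t i x) (RopN t i x j) M (K+1)) = _
    rw [ih (K+1) (by omega) (by omega)]
    rw [rop_gt t _ (show ¬ K-1 ≤ i by omega), rop_gt t _ (show ¬ K ≤ i by omega)]
    show _ = t (wch t x (x i) (K-i-2) (i+1))
        (t (wch t x (x i) (K-i-2) (i+1)) (x K) (x (K+1)))
        (EXn t x (x (j+1)) (t (wch t x (x i) (K-i-2) (i+1)) (x K) (x (K+1))) (K+1) (M+1))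
    have e1 : wch t x (x i) (K-1-i-1) (i+1) = wch t x (x i) (K-i-2) (i+1) := by
      rw [show K-1-i-1 = K-i-2 by omega]
    have e2 : wch t x (x i) (K-i-1) (i+1)
        = t (wch t x (x i) (K-i-2) (i+1)) (x K) (x (K+1)) := by
      rw [show K-i-1 = (K-i-2)+1 by omega]
      show t (wch t x (x i) (K-i-2) (i+1)) (x (i+1+(K-i-2)+1)) (x (i+1+(K-i-2)+2)) = _
      rw [show i+1+(K-i-2)+1 = K by omega, show i+1+(K-i-2)+2 = K+1 by omega]
    have e4 : K+1-i-2 = K-i-1 := by omega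
    rw [e1, e4, e2]

lemma lemb (hLN : ∀ a b c d, t a b (t b c d) = t a (t a b c) (t (t a b c) c d))
    {i j : ℕ} (h2 : i+2 ≤ j) (x : ℕ → X) :
    ∀ m k, 1 ≤ k → k+m = i+1 →
      Av t x j k = zch t (RopN t i x) (RopN t i x j) (j-1-k) k := by
  intro m
  induction m with
  | zero =>
    intro k h1 hk
    have hk' : k = i+1 := by omega
    subst hk'
    -- LHS
    have hL : Av t x j (i+1) = EXn t x (x (j+1)) (x i) (i+1) (j-i-1) := by
      unfold Av
      rw [if_pos (show i+1 ≤ j by omega), show j-(i+1) = (j-i-2)+1 by omega]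
      show t (x (i+1-1)) (x (i+1)) (zch t x (x (j+1)) (j-i-2) (i+1+1)) = _
      rw [show i+1-1 = i from rfl]
      rw [lemexp hLN x (x (j+1)) (j-i-2) (x i) (i+1)]
      rw [show j-i-2+1 = j-i-1 by omega]
    rw [hL]
    by_cases h3 : i+3 ≤ j
    · rw [show j-1-(i+1) = (j-i-3)+1 by omega]
      show _ = t (RopN t i x (i+1-1)) (RopN t i x (i+1))
          (zch t (RopN t i x) (RopN t i x j) (j-i-3) (i+1+1))
      rw [show i+1-1 = i from rfl, show i+1+1 = i+2 from rfl]
      rw [lemwz (show i < j by omega) x (j-i-3) (i+2) (by omega) (by omega)]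
      rw [rop_le t _ (le_refl i), rop_gt t _ (show ¬ i+1 ≤ i by omega)]
      rw [show i+1-i-1 = 0 by omega, show i+2-i-2 = 0 by omega]
      rw [show j-i-1 = (j-i-2)+1 by omega, show j-i-3+1 = j-i-2 by omega]
      rfl
    · have hj : j = i+2 := by omega
      subst hj
      rw [show i+2-1-(i+1) = 0 by omega]
      show _ = t (RopN t i x (i+1-1)) (RopN t i x (i+1)) (RopN t i x (i+2))
      rw [show i+1-1 = i from rfl]
      rw [rop_le t _ (le_refl i), rop_gt t _ (show ¬ i+1 ≤ i by omega),
        rop_gt t _ (show ¬ i+2 ≤ i by omega)]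
      rw [show i+1-i-1 = 0 by omega, show i+2-i-1 = 1 by omega]
      rfl
  | succ m ih =>
    intro k h1 hk
    rw [av_unfold x h1 (show k ≤ j by omega)]
    rw [ih (k+1) (by omega) (by omega)]
    rw [show j-1-k = (j-1-(k+1))+1 by omega]
    show _ = t (RopN t i x (k-1)) (RopN t i x k)
        (zch t (RopN t i x) (RopN t i x j) (j-1-(k+1)) (k+1))
    rw [rop_le t _ (show k-1 ≤ i by omega), rop_le t _ (show k ≤ i by omega)]

lemma reg3 (hRN : ∀ a b c d, t (t a b c) c d = t (t a b (t b c d)) (t b c d) d)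
    {i j : ℕ} (h : i < j) (x : ℕ → X) :
    ∀ m p, j-1+m = p → i < p →
      wch t (LopN t j x) (LopN t j x i) (p-i-1) (i+1) = wch t x (x i) (p-i) (i+1) := by
  intro m
  induction m with
  | zero =>
    intro p hm hp
    have hpj : p = j-1 := by omega
    subst hpj
    rw [show j-1-i-1 = j-i-2 by omega]
    rw [invN hRN x (j-i-2) (by omega) (by omega)]
    rw [show i+(j-i-2)+2 = j by omega, show i+(j-i-2)+3 = j+1 by omega]
    unfold Av
    rw [if_neg (show ¬ j+1 ≤ j by omega)]
    rw [show j-1-i = (j-i-2)+1 by omega]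
    show _ = t (wch t x (x i) (j-i-2) (i+1)) (x (i+1+(j-i-2)+1)) (x (i+1+(j-i-2)+2))
    rw [show i+1+(j-i-2)+1 = j by omega, show i+1+(j-i-2)+2 = j+1 by omega]
  | succ m ih =>
    intro p hm hp
    by_cases hpe : p = i+1
    · -- forces j = i+1 (since p = j+m ≥ j > i and p = i+1)
      have hj : j = i+1 := by omega
      have hm0 : m = 0 := by omega
      subst hj; subst hm0; subst hpe
      rw [show i+1-i-1 = 0 by omega, show i+1-i = 1 by omega]
      show t (LopN t (i+1) x i) (LopN t (i+1) x (i+1)) (LopN t (i+1) x (i+1+1)) = _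
      rw [lop_gt t _ (show ¬ i+1+1 ≤ i+1 by omega), lop_gt t _ (show ¬ i+1+1+1 ≤ i+1 by omega)]
      rw [lop_le t _ (show i+1 ≤ i+1 from le_refl _), show i+1-(i+1) = 0 by omega]
      rfl
    · have hp2 : i+2 ≤ p := by omega
      rw [show p-i-1 = (p-i-2)+1 by omega]
      show t (wch t (LopN t j x) (LopN t j x i) (p-i-2) (i+1))
          (LopN t j x (i+1+(p-i-2)+1)) (LopN t j x (i+1+(p-i-2)+2)) = _
      rw [show i+1+(p-i-2)+1 = p by omega, show i+1+(p-i-2)+2 = p+1 by omega]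
      rw [show p-i-2 = (p-1)-i-1 by omega]
      rw [ih (p-1) (by omega) (by omega)]
      rw [lop_gt t _ (show ¬ p+1 ≤ j by omega), lop_gt t _ (show ¬ p+1+1 ≤ j by omega)]
      rw [show p-i = (p-1-i)+1 by omega]
      show _ = t (wch t x (x i) (p-1-i) (i+1)) (x (i+1+(p-1-i)+1)) (x (i+1+(p-1-i)+2))
      rw [show i+1+(p-1-i)+1 = p+1 by omega, show i+1+(p-1-i)+2 = p+1+1 by omega]

theorem rlN (hLN : ∀ a b c d, t a b (t b c d) = t a (t a b c) (t (t a b c) c d))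
    (hRN : ∀ a b c d, t (t a b c) c d = t (t a b (t b c d)) (t b c d) d)
    {i j : ℕ} (h : i < j) (x : ℕ → X) (p : ℕ) :
    RopN t i (LopN t j x) p = LopN t (j-1) (RopN t i x) p := by
  by_cases hp : p ≤ i
  · rw [rop_le t _ hp, yav x (show p ≤ j by omega)]
    by_cases hq : p+1 ≤ j-1
    · rw [lop_le t _ hq, show (j-1)+1 = j by omega]
      by_cases h2 : i+2 ≤ j
      · exact lemb hLN h2 x (i-p) (p+1) (by omega) (by omega)
      · have hj : j = i+1 := by omega
        subst hj
        rw [show i+1-1-(p+1) = i-p-1 by omega]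
        rw [zch_congr t (RopN t i x (i+1)) (i-p-1) (p+1) (y := x)
          (fun q hq1 hq2 => rop_le t x (by omega))]
        rw [rop_gt t _ (show ¬ i+1 ≤ i by omega), show i+1-i-1 = 0 by omega]
        unfold Av
        rw [if_pos (show p+1 ≤ i+1 by omega)]
        have hzb := zch_bot t x (x (i+2)) (i-p-1) (p+1)
        rw [show p+1+(i-p-1) = i by omega] at hzb
        rw [show i+1-(p+1) = i-p-1+1 by omega]
        show zch t x (x (i+2)) (i-p-1+1) (p+1)
            = zch t x (t (x i) (x (i+1)) (x (i+2))) (i-p-1) (p+1)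
        rw [hzb]
    · have hpi : p = i := by omega
      have hj : j = i+1 := by omega
      subst hpi; subst hj
      rw [lop_gt t _ hq]
      rw [rop_gt t _ (show ¬ p+1 ≤ p by omega), show p+1-p-1 = 0 by omega]
      unfold Av
      rw [if_pos (show p+1 ≤ p+1 from le_refl _), show p+1-(p+1) = 0 by omega]
      rfl
  · rw [rop_gt t _ hp]
    by_cases hq : p+1 ≤ j-1
    · rw [lop_le t _ hq, show (j-1)+1 = j by omega]
      rw [invN hRN x (p-i-1) (by omega) (by omega)]
      rw [show i+(p-i-1)+2 = p+1 by omega, show i+(p-i-1)+3 = p+2 by omega]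
      unfold Av
      rw [if_pos (show p+2 ≤ j by omega)]
      rw [lemexp hLN x (x (j+1)) (j-(p+2)) (wch t x (x i) (p-i-1) (i+1)) (p+1)]
      rw [lemwz (show i < j by omega) x (j-1-(p+1)) (p+1) (by omega) (by omega)]
      rw [show p+1-i-2 = p-i-1 by omega, show j-1-(p+1)+1 = j-(p+2)+1 by omega]
    · rw [lop_gt t _ hq]
      rw [rop_gt t _ (show ¬ p+1 ≤ i by omega)]
      have := reg3 hRN h x (p-(j-1)) p (by omega) (by omega)
      rw [this, show p+1-i-1 = p-i by omega]

theorem lrN {i j : ℕ} (h : i < j) (x : ℕ → X) (p : ℕ) :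
    LopN t i (RopN t j x) p = RopN t (j-1) (LopN t i x) p := by
  by_cases h1 : p+1 ≤ i
  · rw [lop_le t _ h1, rop_le t _ (show p ≤ j-1 by omega), lop_le t _ h1]
    rw [rop_le t _ (show i+1 ≤ j by omega)]
    exact zch_congr t (x (i+1)) (i-(p+1)) (p+1) (y := x)
      (fun q hq1 hq2 => rop_le t x (by omega))
  · by_cases h2 : p ≤ j-1
    · rw [lop_gt t _ h1, rop_le t _ h2, lop_gt t _ h1]
      exact rop_le t x (by omega)
    · rw [lop_gt t _ h1, rop_gt t _ h2, rop_gt t _ (show ¬ p+1 ≤ j by omega)]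
      rw [show p+1-j-1 = p-j by omega, show p-(j-1)-1 = p-j by omega,
        show (j-1)+1 = j by omega]
      rw [lop_gt t x (show ¬ (j-1)+1 ≤ i by omega), show (j-1)+1 = j by omega]
      rw [wch_congr t (x j) (p-j) j (y := fun q => x (q+1))
        (fun q hq1 hq2 => lop_gt t x (by omega))]
      rw [wch_shift t x (x j) (p-j) j]


/-! ### congruence lemmas for the face formulas -/

lemma LopN_congr {x y : ℕ → X} {N : ℕ} (hxy : ∀ k, k ≤ N → x k = y k)
    {i p : ℕ} (hp : p+1 ≤ N) (hi : i+1 ≤ N) : LopN t i x p = LopN t i y p := by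
  unfold LopN
  by_cases h1 : p+1 ≤ i
  · rw [if_pos h1, if_pos h1, hxy (i+1) hi,
      zch_congr t (y (i+1)) (i-(p+1)) (p+1) (fun q hq1 hq2 => hxy q (by omega))]
  · rw [if_neg h1, if_neg h1, hxy (p+1) hp]

lemma RopN_congr {x y : ℕ → X} {N : ℕ} (hxy : ∀ k, k ≤ N → x k = y k)
    {i p : ℕ} (hp : p+1 ≤ N) (hi : i ≤ N) : RopN t i x p = RopN t i y p := by
  unfold RopN
  by_cases h1 : p ≤ i
  · rw [if_pos h1, if_pos h1, hxy p (by omega)]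
  · rw [if_neg h1, if_neg h1, hxy i hi,
      wch_congr t (y i) (p-i-1) (i+1) (fun q hq1 hq2 => hxy q (by omega))]

/-! ### update steps -/

lemma lopn_update (x : ℕ → X) (i p : ℕ) :
    LopN t i (Function.update x (i+1) (t (x i) (x (i+1)) (x (i+2)))) p = LopN t (i+1) x p := by
  set x' := Function.update x (i+1) (t (x i) (x (i+1)) (x (i+2))) with hx'
  have hxq : ∀ q, q ≠ i+1 → x' q = x q := by
    intro q hq
    rw [hx', Function.update_apply, if_neg hq]
  have hxi : x' (i+1) = t (x i) (x (i+1)) (x (i+2)) := by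
    rw [hx', Function.update_apply, if_pos rfl]
  unfold LopN
  by_cases h1 : p+1 ≤ i
  · rw [if_pos h1, if_pos (show p+1 ≤ i+1 by omega), hxi]
    rw [zch_congr t _ (i-(p+1)) (p+1) (y := x) (fun q hq1 hq2 => hxq q (by omega))]
    have hzb := zch_bot t x (x (i+2)) (i-(p+1)) (p+1)
    rw [show p+1+(i-(p+1)) = i by omega] at hzb
    rw [hzb, show i-(p+1)+1 = i+1-(p+1) by omega]
  · by_cases h2 : p+1 ≤ i+1
    · have hpi : p = i := by omega
      subst hpi
      rw [if_neg h1, if_pos h2, hxi, show p+1-(p+1) = 0 by omega]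
      rfl
    · rw [if_neg h1, if_neg h2, hxq (p+1) (by omega)]

lemma ropn_update (x : ℕ → X) (i p : ℕ) :
    RopN t (i+1) (Function.update x (i+1) (t (x i) (x (i+1)) (x (i+2)))) p = RopN t i x p := by
  set x' := Function.update x (i+1) (t (x i) (x (i+1)) (x (i+2))) with hx'
  have hxq : ∀ q, q ≠ i+1 → x' q = x q := by
    intro q hq
    rw [hx', Function.update_apply, if_neg hq]
  have hxi : x' (i+1) = t (x i) (x (i+1)) (x (i+2)) := by
    rw [hx', Function.update_apply, if_pos rfl]
  unfold RopN
  by_cases h1 : p ≤ i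
  · rw [if_pos h1, if_pos (show p ≤ i+1 by omega), hxq p (by omega)]
  · by_cases h2 : p ≤ i+1
    · have hpi : p = i+1 := by omega
      subst hpi
      rw [if_pos h2, if_neg h1, hxi, show i+1-i-1 = 0 by omega]
      rfl
    · rw [if_neg h2, if_neg h1, hxi]
      rw [wch_congr t _ (p-(i+1)-1) (i+1+1) (y := x) (fun q hq1 hq2 => hxq q (by omega))]
      have hwb := wch_bot t x (x i) (p-i-2) (i+1)
      rw [show p-(i+1)-1 = p-i-2 by omega, show i+1+1 = i+2 from rfl]
      rw [show (i+1)+1 = i+2 from rfl] at hwb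
      rw [hwb, show p-i-2+1 = p-i-1 by omega]

/-! ### bridges from `Fin` tuples to ℕ-sequences -/

lemma fe_subst {n : ℕ} (x : Fin (n+2) → X) {r : ℕ} (hr1 : 1 ≤ r) (hr2 : r ≤ n+1)
    {k : ℕ} (hk : k ≤ n+1) :
    subst t n r x ((k : ℕ) : Fin (n+2))
      = Function.update (fun m => x ((m : ℕ) : Fin (n+2))) r
          (t (x (((r-1 : ℕ) : Fin (n+2)))) (x ((r : ℕ) : Fin (n+2))) (x (((r+1 : ℕ) : Fin (n+2))))) k := by
  unfold subst
  rw [Function.update_apply, Function.update_apply]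
  have hcast : ∀ a b : ℕ, a ≤ n+1 → b ≤ n+1 →
      (((a : ℕ) : Fin (n+2)) = ((b : ℕ) : Fin (n+2)) ↔ a = b) := by
    intro a b ha hb
    constructor
    · intro hab
      have := congrArg Fin.val hab
      rwa [Fin.val_cast_of_lt (by omega), Fin.val_cast_of_lt (by omega)] at this
    · intro hab; rw [hab]
  have harg1 : ((r : ℕ) : Fin (n+2)) - 1 = ((r-1 : ℕ) : Fin (n+2)) := by
    rw [show r = (r-1)+1 by omega]
    push_cast
    rw [add_sub_cancel_right]
  have harg2 : ((r : ℕ) : Fin (n+2)) + 1 = ((r+1 : ℕ) : Fin (n+2)) := by push_cast; rfl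
  by_cases h : k = r
  · subst h
    rw [if_pos rfl, if_pos rfl, harg1, harg2]
  · rw [if_neg (fun hc => h ((hcast k r hk hr2).1 hc)), if_neg h]

lemma bridgeL {n : ℕ} : ∀ i, i ≤ n → ∀ (x : Fin (n+2) → X) (q : Fin (n+1)),
    dL t n i x q = LopN t i (fun m => x ((m : ℕ) : Fin (n+2))) (q : ℕ) := by
  intro i
  induction i with
  | zero =>
    intro _ x q
    show x q.succ = LopN t 0 _ (q : ℕ)
    rw [lop_gt t _ (by omega)]
    congr 1
    ext
    rw [Fin.val_cast_of_lt (by omega)]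
    rfl
  | succ i ih =>
    intro hi x q
    show dL t n i (subst t n (i+1) x) q = _
    rw [ih (by omega) (subst t n (i+1) x) q]
    rw [LopN_congr (N := n+1)
      (fun k hk => fe_subst x (by omega) (by omega) hk) (by omega) (by omega)]
    exact lopn_update (fun m => x ((m : ℕ) : Fin (n+2))) i (q : ℕ)

lemma bridgeRa {n : ℕ} : ∀ m, m ≤ n → ∀ (x : Fin (n+2) → X) (q : Fin (n+1)),
    dRa t n m x q = RopN t (n-m) (fun k => x ((k : ℕ) : Fin (n+2))) (q : ℕ) := by
  intro m
  induction m with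
  | zero =>
    intro _ x q
    show x q.castSucc = RopN t n _ (q : ℕ)
    rw [rop_le t _ (by omega)]
    congr 1
    ext
    rw [Fin.val_cast_of_lt (by omega)]
    rfl
  | succ m ih =>
    intro hm x q
    show dRa t n m (subst t n (n-m) x) q = _
    rw [ih (by omega) (subst t n (n-m) x) q]
    rw [RopN_congr (N := n+1)
      (fun k hk => fe_subst x (by omega) (by omega) hk) (by omega) (by omega)]
    have := ropn_update (t := t) (fun k => x ((k : ℕ) : Fin (n+2))) (n-m-1) (q : ℕ)
    rw [show n-m-1+1 = n-m by omega, show n-m-1+2 = n-m+1 by omega] at this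
    rw [this, show n-m-1 = n-(m+1) by omega]

lemma bridgeR {n : ℕ} (i : ℕ) (hi : i ≤ n) (x : Fin (n+2) → X) (q : Fin (n+1)) :
    dR t n i x q = RopN t i (fun k => x ((k : ℕ) : Fin (n+2))) (q : ℕ) := by
  show dRa t n (n-i) x q = _
  rw [bridgeRa (n-i) (by omega) x q, show n-(n-i) = i by omega]


/-! ### mirror symmetry -/

lemma cast_rev {n : ℕ} (a : ℕ) (ha : a ≤ n+1) :
    ((a : ℕ) : Fin (n+2)).rev = ((n+1-a : ℕ) : Fin (n+2)) := by
  ext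
  rw [Fin.val_rev, Fin.val_cast_of_lt (by omega), Fin.val_cast_of_lt (by omega)]
  omega

lemma subst_rev {n : ℕ} (m : ℕ) (hm : m+1 ≤ n) (x : Fin (n+2) → X) (q : Fin (n+2)) :
    subst t n (n-m) x q.rev
      = subst (fun a b c => t c b a) n (m+1) (fun r => x r.rev) q := by
  unfold subst
  rw [Function.update_apply, Function.update_apply]
  have h1 : (((n-m : ℕ) : Fin (n+2))).rev = ((m+1 : ℕ) : Fin (n+2)) := by
    rw [cast_rev (n-m) (by omega), show n+1-(n-m) = m+1 by omega]
  have hiff : q.rev = ((n-m : ℕ) : Fin (n+2)) ↔ q = ((m+1 : ℕ) : Fin (n+2)) := by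
    constructor
    · intro hc; rw [← Fin.rev_rev q, hc, h1]
    · intro hc; rw [hc, ← h1, Fin.rev_rev]
  have c1 : ((m+1 : ℕ) : Fin (n+2)) = ((m : ℕ) : Fin (n+2)) + 1 := by push_cast; ring
  have e1 : (((m+1 : ℕ) : Fin (n+2)) - 1).rev = ((n-m : ℕ) : Fin (n+2)) + 1 := by
    rw [c1, add_sub_cancel_right, cast_rev m (by omega),
      show ((n-m : ℕ) : Fin (n+2)) + 1 = ((n-m+1 : ℕ) : Fin (n+2)) by push_cast; ring,
      show n+1-m = n-m+1 by omega]
  have e2 : (((m+1 : ℕ) : Fin (n+2))).rev = ((n-m : ℕ) : Fin (n+2)) := by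
    rw [← h1, Fin.rev_rev]
  have e3 : (((m+1 : ℕ) : Fin (n+2)) + 1).rev = ((n-m : ℕ) : Fin (n+2)) - 1 := by
    have c2 : ((m+1 : ℕ) : Fin (n+2)) + 1 = ((m+2 : ℕ) : Fin (n+2)) := by
      exact (Nat.cast_succ (m+1)).symm
    have c3 : ((n-m : ℕ) : Fin (n+2)) = ((n-m-1 : ℕ) : Fin (n+2)) + 1 := by
      rw [show n-m = (n-m-1)+1 by omega]; push_cast; ring
    rw [c2, cast_rev (m+2) (by omega), c3, add_sub_cancel_right,
      show n+1-(m+2) = n-m-1 by omega]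
  by_cases h : q = ((m+1 : ℕ) : Fin (n+2))
  · rw [if_pos (hiff.2 h), if_pos h]
    show t (x (((n-m : ℕ) : Fin (n+2)) - 1)) (x ((n-m : ℕ) : Fin (n+2)))
        (x (((n-m : ℕ) : Fin (n+2)) + 1))
      = t (x ((((m+1 : ℕ) : Fin (n+2)) + 1).rev)) (x ((((m+1 : ℕ) : Fin (n+2))).rev))
        (x ((((m+1 : ℕ) : Fin (n+2)) - 1).rev))
    rw [e1, e2, e3]
  · rw [if_neg (fun hc => h (hiff.1 hc)), if_neg h]

lemma dRa_mirror {n : ℕ} : ∀ m, m ≤ n → ∀ (x : Fin (n+2) → X) (p : Fin (n+1)),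
    dRa t n m x p = dL (fun a b c => t c b a) n m (fun q => x q.rev) p.rev := by
  intro m
  induction m with
  | zero =>
    intro _ x p
    show x p.castSucc = x p.rev.succ.rev
    rw [Fin.rev_succ, Fin.rev_rev]
  | succ m ih =>
    intro hm x p
    show dRa t n m (subst t n (n-m) x) p = dL _ n m (subst _ n (m+1) (fun q => x q.rev)) p.rev
    rw [ih (by omega) (subst t n (n-m) x) p]
    congr 1
    funext q
    exact subst_rev m hm x q

lemma dR_mirror {n : ℕ} (i : ℕ) (x : Fin (n+2) → X) (p : Fin (n+1)) :
    dR t n i x p = dL (fun a b c => t c b a) n (n-i) (fun q => x q.rev) p.rev :=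
  dRa_mirror (n-i) (by omega) x p

/-! ### the four commutation relations on tuples -/

theorem finLL (hLN : ∀ a b c d, t a b (t b c d) = t a (t a b c) (t (t a b c) c d))
    (hRN : ∀ a b c d, t (t a b c) c d = t (t a b (t b c d)) (t b c d) d)
    {n i j : ℕ} (hij : i < j) (hj : j ≤ n+1) (x : Fin (n+3) → X) (p : Fin (n+1)) :
    dL t n i (dL t (n+1) j x) p = dL t n (j-1) (dL t (n+1) i x) p := by
  rw [bridgeL i (by omega) _ p, bridgeL (j-1) (by omega) _ p]
  have c1 : LopN t i (fun k => dL t (n+1) j x ((k : ℕ) : Fin (n+2))) ((p : ℕ))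
      = LopN t i (LopN t j (fun m => x ((m : ℕ) : Fin (n+3)))) ((p : ℕ)) :=
    LopN_congr (N := n+1) (fun k hk => by
      rw [bridgeL j hj x ((k : ℕ) : Fin (n+2)), Fin.val_cast_of_lt (by omega)])
      (by omega) (by omega)
  have c2 : LopN t (j-1) (fun k => dL t (n+1) i x ((k : ℕ) : Fin (n+2))) ((p : ℕ))
      = LopN t (j-1) (LopN t i (fun m => x ((m : ℕ) : Fin (n+3)))) ((p : ℕ)) :=
    LopN_congr (N := n+1) (fun k hk => by
      rw [bridgeL i (by omega) x ((k : ℕ) : Fin (n+2)), Fin.val_cast_of_lt (by omega)])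
      (by omega) (by omega)
  rw [c1, c2]
  exact llN hLN hRN hij _ _

theorem finLR {n i j : ℕ} (hij : i < j) (hj : j ≤ n+1) (x : Fin (n+3) → X) (p : Fin (n+1)) :
    dL t n i (dR t (n+1) j x) p = dR t n (j-1) (dL t (n+1) i x) p := by
  rw [bridgeL i (by omega) _ p, bridgeR (j-1) (by omega) _ p]
  have c1 : LopN t i (fun k => dR t (n+1) j x ((k : ℕ) : Fin (n+2))) ((p : ℕ))
      = LopN t i (RopN t j (fun m => x ((m : ℕ) : Fin (n+3)))) ((p : ℕ)) :=
    LopN_congr (N := n+1) (fun k hk => by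
      rw [bridgeR j hj x ((k : ℕ) : Fin (n+2)), Fin.val_cast_of_lt (by omega)])
      (by omega) (by omega)
  have c2 : RopN t (j-1) (fun k => dL t (n+1) i x ((k : ℕ) : Fin (n+2))) ((p : ℕ))
      = RopN t (j-1) (LopN t i (fun m => x ((m : ℕ) : Fin (n+3)))) ((p : ℕ)) :=
    RopN_congr (N := n+1) (fun k hk => by
      rw [bridgeL i (by omega) x ((k : ℕ) : Fin (n+2)), Fin.val_cast_of_lt (by omega)])
      (by omega) (by omega)
  rw [c1, c2]
  exact lrN hij _ _

theorem finRL (hLN : ∀ a b c d, t a b (t b c d) = t a (t a b c) (t (t a b c) c d))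
    (hRN : ∀ a b c d, t (t a b c) c d = t (t a b (t b c d)) (t b c d) d)
    {n i j : ℕ} (hij : i < j) (hj : j ≤ n+1) (x : Fin (n+3) → X) (p : Fin (n+1)) :
    dR t n i (dL t (n+1) j x) p = dL t n (j-1) (dR t (n+1) i x) p := by
  rw [bridgeR i (by omega) _ p, bridgeL (j-1) (by omega) _ p]
  have c1 : RopN t i (fun k => dL t (n+1) j x ((k : ℕ) : Fin (n+2))) ((p : ℕ))
      = RopN t i (LopN t j (fun m => x ((m : ℕ) : Fin (n+3)))) ((p : ℕ)) :=
    RopN_congr (N := n+1) (fun k hk => by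
      rw [bridgeL j hj x ((k : ℕ) : Fin (n+2)), Fin.val_cast_of_lt (by omega)])
      (by omega) (by omega)
  have c2 : LopN t (j-1) (fun k => dR t (n+1) i x ((k : ℕ) : Fin (n+2))) ((p : ℕ))
      = LopN t (j-1) (RopN t i (fun m => x ((m : ℕ) : Fin (n+3)))) ((p : ℕ)) :=
    LopN_congr (N := n+1) (fun k hk => by
      rw [bridgeR i (by omega) x ((k : ℕ) : Fin (n+2)), Fin.val_cast_of_lt (by omega)])
      (by omega) (by omega)
  rw [c1, c2]
  exact rlN hLN hRN hij _ _

theorem finRR (hLN : ∀ a b c d, t a b (t b c d) = t a (t a b c) (t (t a b c) c d))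
    (hRN : ∀ a b c d, t (t a b c) c d = t (t a b (t b c d)) (t b c d) d)
    {n i j : ℕ} (hij : i < j) (hj : j ≤ n+1) (x : Fin (n+3) → X) (p : Fin (n+1)) :
    dR t n i (dR t (n+1) j x) p = dR t n (j-1) (dR t (n+1) i x) p := by
  have hLN' : ∀ a b c d, (fun a b c => t c b a) a b ((fun a b c => t c b a) b c d)
      = (fun a b c => t c b a) a ((fun a b c => t c b a) a b c)
        ((fun a b c => t c b a) ((fun a b c => t c b a) a b c) c d) :=
    fun a b c d => hRN d c b a
  have hRN' : ∀ a b c d, (fun a b c => t c b a) ((fun a b c => t c b a) a b c) c d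
      = (fun a b c => t c b a) ((fun a b c => t c b a) a b ((fun a b c => t c b a) b c d))
        ((fun a b c => t c b a) b c d) d :=
    fun a b c d => hLN d c b a
  rw [dR_mirror i _ p, dR_mirror (j-1) _ p]
  have e1 : (fun q : Fin (n+2) => dR t (n+1) j x q.rev)
      = dL (fun a b c => t c b a) (n+1) (n+1-j) (fun r => x r.rev) := by
    funext q
    rw [dR_mirror j x q.rev, Fin.rev_rev]
  have e2 : (fun q : Fin (n+2) => dR t (n+1) i x q.rev)
      = dL (fun a b c => t c b a) (n+1) (n+1-i) (fun r => x r.rev) := by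
    funext q
    rw [dR_mirror i x q.rev, Fin.rev_rev]
  rw [e1, e2, show n-(j-1) = n+1-j by omega]
  have := finLL (t := fun a b c => t c b a) hLN' hRN'
    (show n+1-j < n+1-i by omega) (show n+1-i ≤ n+1 by omega) (fun r => x r.rev) p.rev
  rw [show n+1-i-1 = n-i by omega] at this
  exact this.symm


/-! ### module level -/

lemma sum_comp_sum' {R M N P : Type*} [CommRing R] [AddCommGroup M] [AddCommGroup N]
    [AddCommGroup P] [Module R M] [Module R N] [Module R P]
    {ι κ : Type*} (s : Finset ι) (u : Finset κ) (F : ι → (N →ₗ[R] P)) (G : κ → (M →ₗ[R] N)) :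
    (∑ i ∈ s, F i).comp (∑ j ∈ u, G j) = ∑ i ∈ s, ∑ j ∈ u, (F i).comp (G j) := by
  ext v
  simp [LinearMap.sum_apply, map_sum]

lemma hat_swap (R : Type*) [CommRing R] (t : X → X → X → X)
    (hLN : ∀ a b c d, t a b (t b c d) = t a (t a b c) (t (t a b c) c d))
    (hRN : ∀ a b c d, t (t a b c) c d = t (t a b (t b c d)) (t b c d) d)
    {n i j : ℕ} (hij : i < j) (hj : j ≤ n+1) :
    (dLhat R t n i - dRhat R t n i).comp (dLhat R t (n+1) j - dRhat R t (n+1) j)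
      = (dLhat R t n (j-1) - dRhat R t n (j-1)).comp
          (dLhat R t (n+1) i - dRhat R t (n+1) i) := by
  have cLL : (dLhat R t n i).comp (dLhat R t (n+1) j)
      = (dLhat R t n (j-1)).comp (dLhat R t (n+1) i) := by
    unfold dLhat
    rw [← Finsupp.lmapDomain_comp, ← Finsupp.lmapDomain_comp]
    congr 1
    funext x
    funext p
    exact finLL hLN hRN hij hj x p
  have cLR : (dLhat R t n i).comp (dRhat R t (n+1) j)
      = (dRhat R t n (j-1)).comp (dLhat R t (n+1) i) := by
    unfold dLhat dRhat
    rw [← Finsupp.lmapDomain_comp, ← Finsupp.lmapDomain_comp]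
    congr 1
    funext x
    funext p
    exact finLR hij hj x p
  have cRL : (dRhat R t n i).comp (dLhat R t (n+1) j)
      = (dLhat R t n (j-1)).comp (dRhat R t (n+1) i) := by
    unfold dLhat dRhat
    rw [← Finsupp.lmapDomain_comp, ← Finsupp.lmapDomain_comp]
    congr 1
    funext x
    funext p
    exact finRL hLN hRN hij hj x p
  have cRR : (dRhat R t n i).comp (dRhat R t (n+1) j)
      = (dRhat R t n (j-1)).comp (dRhat R t (n+1) i) := by
    unfold dRhat
    rw [← Finsupp.lmapDomain_comp, ← Finsupp.lmapDomain_comp]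
    congr 1
    funext x
    funext p
    exact finRR hLN hRN hij hj x p
  simp only [LinearMap.sub_comp, LinearMap.comp_sub]
  rw [cLL, cLR, cRL, cRR]
  abel

end AuxDev

/-- The differential `∂ₙ = Σ_{i=0}^{n} (−1)ⁱ (dᵢⁿ'ᴸ − dᵢⁿ'ᴿ)`
on `Cₙ = R⟨X^{n+2}⟩` satisfies `∂ₙ₋₁ ∘ ∂ₙ = 0` when the ternary operation
satisfies LN and RN. -/
theorem stmt7 (R : Type*) [CommRing R] (t : X → X → X → X)
    (hLN : ∀ a b c d, t a b (t b c d) = t a (t a b c) (t (t a b c) c d))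
    (hRN : ∀ a b c d, t (t a b c) c d = t (t a b (t b c d)) (t b c d) d) :
    ∀ n : ℕ,
      ((∑ i ∈ Finset.range (n + 1),
          ((-1 : R) ^ i) • (dLhat R t n i - dRhat R t n i)).comp
        (∑ i ∈ Finset.range (n + 2),
          ((-1 : R) ^ i) • (dLhat R t (n + 1) i - dRhat R t (n + 1) i))) = 0 := by
  intro n
  rw [sum_comp_sum']
  have step : ∀ i ∈ Finset.range (n+1), ∀ j ∈ Finset.range (n+2),
      (((-1:R)^i) • (dLhat R t n i - dRhat R t n i)).comp
        (((-1:R)^j) • (dLhat R t (n+1) j - dRhat R t (n+1) j))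
      = ((-1:R)^(i+j)) • ((dLhat R t n i - dRhat R t n i).comp
          (dLhat R t (n+1) j - dRhat R t (n+1) j)) := by
    intro i _ j _
    rw [LinearMap.smul_comp, LinearMap.comp_smul, smul_smul, ← pow_add]
  rw [Finset.sum_congr rfl (fun i hi => Finset.sum_congr rfl (fun j hj => step i hi j hj))]
  rw [← Finset.sum_product']
  refine Finset.sum_involution
    (fun a _ => if a.1 < a.2 then (a.2 - 1, a.1) else (a.2, a.1 + 1)) ?_ ?_ ?_ ?_
  · rintro ⟨i, j⟩ ha
    simp only [Finset.mem_product, Finset.mem_range] at ha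
    by_cases hij : i < j
    · simp only [if_pos hij]
      have hs := hat_swap R t hLN hRN (n := n) hij (by omega)
      show ((-1:R))^(i+j) • ((dLhat R t n i - dRhat R t n i).comp
          (dLhat R t (n+1) j - dRhat R t (n+1) j))
        + ((-1:R))^((j-1)+i) • ((dLhat R t n (j-1) - dRhat R t n (j-1)).comp
          (dLhat R t (n+1) i - dRhat R t (n+1) i)) = 0
      rw [hs, ← add_smul, show i+j = ((j-1)+i)+1 by omega, pow_succ,
        show ((-1:R))^((j-1)+i) * (-1) + ((-1:R))^((j-1)+i) = 0 by ring, zero_smul]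
    · simp only [if_neg hij]
      have hji : j < i+1 := by omega
      have hs := hat_swap R t hLN hRN (n := n) hji (by omega)
      rw [show i+1-1 = i from rfl] at hs
      show ((-1:R))^(i+j) • ((dLhat R t n i - dRhat R t n i).comp
          (dLhat R t (n+1) j - dRhat R t (n+1) j))
        + ((-1:R))^(j+(i+1)) • ((dLhat R t n j - dRhat R t n j).comp
          (dLhat R t (n+1) (i+1) - dRhat R t (n+1) (i+1))) = 0
      rw [hs, ← add_smul, show j+(i+1) = (i+j)+1 by omega, pow_succ,
        show ((-1:R))^(i+j) + ((-1:R))^(i+j) * (-1) = 0 by ring, zero_smul]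
  · rintro ⟨i, j⟩ ha _
    simp only [Finset.mem_product, Finset.mem_range] at ha
    by_cases hij : i < j
    · simp only [if_pos hij]
      intro hc
      rw [Prod.ext_iff] at hc
      simp only at hc
      omega
    · simp only [if_neg hij]
      intro hc
      rw [Prod.ext_iff] at hc
      simp only at hc
      omega
  · rintro ⟨i, j⟩ ha
    simp only [Finset.mem_product, Finset.mem_range] at ha
    by_cases hij : i < j
    · simp only [if_pos hij, Finset.mem_product, Finset.mem_range]
      omega
    · simp only [if_neg hij, Finset.mem_product, Finset.mem_range]
      omega
  · rintro ⟨i, j⟩ ha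
    simp only [Finset.mem_product, Finset.mem_range] at ha
    by_cases hij : i < j
    · simp only [if_pos hij]
      split_ifs with h2
      · exact absurd (show j - 1 < i from h2) (by omega)
      · rw [Prod.mk.injEq]
        exact ⟨rfl, by omega⟩
    · simp only [if_neg hij]
      split_ifs with h2
      · rw [Prod.mk.injEq]
        exact ⟨by omega, rfl⟩
      · exact absurd (show (j, i+1).1 < (j, i+1).2 from show j < i+1 by omega) h2
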